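/- Let H be a self-adjoint operator on L²(ℝᵈ) with purely discrete spectrum and nondecreasing eigenvalues {λ_j} (with orthonormal eigenbasis), and let ρ ∈ 𝓔⁺ be a density operator with nonincreasing eigenvalues {ρ_j} such that Tr(√H ρ √H) < ∞. Then Σ_j λ_j ρ_j ≤ Tr(√H ρ √H). -/

import Mathlib

open scoped ENNReal

/-- Abel summation comparison with slack term. -/
lemma abel_aux (r b a : ℕ → ℝ≥0∞) (hr : Antitone r) (hb : ∀ j, b j ≠ ∞)
    (h : ∀ N, ∑ j ∈ Finset.range N, b j ≤ ∑ j ∈ Finset.range N, a j) (N : ℕ) :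
    ∑ j ∈ Finset.range N, r j * b j
      + r N * ((∑ j ∈ Finset.range N, a j) - ∑ j ∈ Finset.range N, b j)
      ≤ ∑ j ∈ Finset.range N, r j * a j := by
  induction N with
  | zero => simp
  | succ N ih =>
    set A := ∑ j ∈ Finset.range N, a j with hA
    set B := ∑ j ∈ Finset.range N, b j with hBdef
    have hBfin : B ≠ ∞ := by
      rw [hBdef]
      exact (ENNReal.sum_lt_top.mpr fun j _ => (hb j).lt_top).ne
    have hBN : B + b N ≠ ∞ := ENNReal.add_ne_top.mpr ⟨hBfin, hb N⟩
    have h1 : B + b N ≤ A + a N := by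
      simpa [Finset.sum_range_succ, hA, hBdef] using h (N + 1)
    have key : b N + ((A + a N) - (B + b N)) = (A - B) + a N := by
      rw [← ENNReal.add_right_inj hBN]
      have e1 : ((A + a N) - (B + b N)) + (B + b N) = A + a N :=
        tsub_add_cancel_of_le h1
      have e2 : (A - B) + B = A := tsub_add_cancel_of_le (h N)
      calc (B + b N) + (b N + ((A + a N) - (B + b N)))
          = b N + (((A + a N) - (B + b N)) + (B + b N)) := by
            simp only [add_comm, add_left_comm, add_assoc]
        _ = b N + (A + a N) := by rw [e1]
        _ = (B + b N) + ((A - B) + a N) := by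
            conv_lhs => rw [← e2]
            simp only [add_comm, add_left_comm, add_assoc]
    calc ∑ j ∈ Finset.range (N + 1), r j * b j
          + r (N + 1) * ((∑ j ∈ Finset.range (N + 1), a j) - ∑ j ∈ Finset.range (N + 1), b j)
        = (∑ j ∈ Finset.range N, r j * b j) + r N * b N
            + r (N + 1) * ((A + a N) - (B + b N)) := by
          rw [Finset.sum_range_succ, Finset.sum_range_succ, Finset.sum_range_succ]
      _ ≤ (∑ j ∈ Finset.range N, r j * b j) + r N * b N
            + r N * ((A + a N) - (B + b N)) := by
          gcongr
          exact hr (Nat.le_succ N)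
      _ = (∑ j ∈ Finset.range N, r j * b j)
            + r N * (b N + ((A + a N) - (B + b N))) := by
          rw [mul_add, add_assoc]
      _ = (∑ j ∈ Finset.range N, r j * b j)
            + (r N * (A - B) + r N * a N) := by rw [key, mul_add]
      _ = ((∑ j ∈ Finset.range N, r j * b j) + r N * (A - B)) + r N * a N := by
          rw [add_assoc]
      _ ≤ (∑ j ∈ Finset.range N, r j * a j) + r N * a N := by
          gcongr
      _ = ∑ j ∈ Finset.range (N + 1), r j * a j := by
          rw [Finset.sum_range_succ]

lemma tsum_le_of_partial (f g : ℕ → ℝ≥0∞)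
    (h : ∀ N, ∑ j ∈ Finset.range N, f j ≤ ∑ j ∈ Finset.range N, g j) :
    ∑' j, f j ≤ ∑' j, g j := by
  rw [ENNReal.tsum_eq_iSup_sum]
  refine iSup_le fun s => ?_
  obtain ⟨N, hN⟩ := s.exists_nat_subset_range
  calc ∑ j ∈ s, f j ≤ ∑ j ∈ Finset.range N, f j :=
        Finset.sum_le_sum_of_subset hN
    _ ≤ ∑ j ∈ Finset.range N, g j := h N
    _ ≤ ∑' j, g j := ENNReal.sum_le_tsum _

/-- Bathtub principle. -/
lemma bathtub (L t : ℕ → ℝ≥0∞) (hL : Monotone L) (ht1 : ∀ k, t k ≤ 1) (N : ℕ)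
    (htN : (N : ℝ≥0∞) ≤ ∑' k, t k) :
    ∑ k ∈ Finset.range N, L k ≤ ∑' k, L k * t k := by
  cases N with
  | zero => simp
  | succ M =>
    have hsplit : ∑ k ∈ Finset.range (M + 1), L k * t k + ∑' i, L (i + (M + 1)) * t (i + (M + 1))
        = ∑' k, L k * t k := Summable.sum_add_tsum_nat_add' ENNReal.summable
    have hpartfin : (∑ k ∈ Finset.range (M + 1), t k) ≠ ∞ :=
      (ENNReal.sum_lt_top.mpr fun k _ => lt_of_le_of_lt (ht1 k) ENNReal.one_lt_top).ne
    have h3 : ∑ k ∈ Finset.range (M + 1), (1 - t k) ≤ ∑' i, t (i + (M + 1)) := by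
      rw [← ENNReal.add_le_add_iff_left hpartfin, ← Finset.sum_add_distrib]
      have heq : ∀ k ∈ Finset.range (M + 1), t k + (1 - t k) = 1 := fun k _ =>
        add_tsub_cancel_of_le (ht1 k)
      rw [Finset.sum_congr rfl heq, Finset.sum_const, Finset.card_range, nsmul_eq_mul, mul_one]
      calc ((M + 1 : ℕ) : ℝ≥0∞) ≤ ∑' k, t k := htN
        _ = ∑ k ∈ Finset.range (M + 1), t k + ∑' i, t (i + (M + 1)) :=
            (Summable.sum_add_tsum_nat_add' ENNReal.summable).symm
    calc ∑ k ∈ Finset.range (M + 1), L k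
        = ∑ k ∈ Finset.range (M + 1), (L k * t k + L k * (1 - t k)) := by
          refine Finset.sum_congr rfl fun k _ => ?_
          rw [← mul_add, add_tsub_cancel_of_le (ht1 k), mul_one]
      _ = ∑ k ∈ Finset.range (M + 1), L k * t k
            + ∑ k ∈ Finset.range (M + 1), L k * (1 - t k) := Finset.sum_add_distrib
      _ ≤ ∑ k ∈ Finset.range (M + 1), L k * t k
            + ∑ k ∈ Finset.range (M + 1), L M * (1 - t k) := by
          gcongr with k hk
          exact hL (Nat.lt_succ_iff.mp (Finset.mem_range.mp hk))
      _ = ∑ k ∈ Finset.range (M + 1), L k * t k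
            + L M * ∑ k ∈ Finset.range (M + 1), (1 - t k) := by rw [Finset.mul_sum]
      _ ≤ ∑ k ∈ Finset.range (M + 1), L k * t k + L M * ∑' i, t (i + (M + 1)) := by
          gcongr
      _ = ∑ k ∈ Finset.range (M + 1), L k * t k + ∑' i, L M * t (i + (M + 1)) := by
          rw [ENNReal.tsum_mul_left]
      _ ≤ ∑ k ∈ Finset.range (M + 1), L k * t k + ∑' i, L (i + (M + 1)) * t (i + (M + 1)) := by
          gcongr with i
          exact hL (by omega)
      _ = ∑' k, L k * t k := hsplit

/-- Min-max trace inequality: if `H` has nondecreasing eigenvalues `λ_j` with orthonormal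
eigenbasis `e` and `ρ` has nonincreasing eigenvalues `ρ_j` with orthonormal eigenvectors `ψ_j`,
then `Σ_j λ_j ρ_j ≤ Tr(√H ρ √H) = Σ_j ρ_j Σ_k λ_k |⟨e_k, ψ_j⟩|²`. -/
theorem stmt6 {H : Type*} [NormedAddCommGroup H] [InnerProductSpace ℂ H] [CompleteSpace H]
    (e : HilbertBasis ℕ ℂ H) (ψ : ℕ → H) (hψ : Orthonormal ℂ ψ)
    (lam ρ : ℕ → ℝ) (hlam : Monotone lam) (hlam0 : ∀ j, 0 ≤ lam j)
    (hρ : Antitone ρ) (hρ0 : ∀ j, 0 ≤ ρ j) :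
    ∑' j, ENNReal.ofReal (lam j * ρ j)
      ≤ ∑' j, ENNReal.ofReal (ρ j)
          * ∑' k, ENNReal.ofReal (lam k) * (‖(inner ℂ (e k) (ψ j) : ℂ)‖₊ : ℝ≥0∞) ^ 2 := by
  have hterm : ∀ x y : H, (‖(inner ℂ x y : ℂ)‖₊ : ℝ≥0∞) ^ 2
      = ENNReal.ofReal (‖(inner ℂ x y : ℂ)‖ ^ 2) := fun x y => by
    rw [ENNReal.ofReal_pow (norm_nonneg _), ofReal_norm, enorm_eq_nnnorm]
  set L : ℕ → ℝ≥0∞ := fun k => ENNReal.ofReal (lam k) with hLdef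
  set c : ℕ → ℝ≥0∞ :=
    fun j => ∑' k, L k * (‖(inner ℂ (e k) (ψ j) : ℂ)‖₊ : ℝ≥0∞) ^ 2 with hcdef
  -- Parseval
  have parseval : ∀ j, ∑' k, (‖(inner ℂ (e k) (ψ j) : ℂ)‖₊ : ℝ≥0∞) ^ 2 = 1 := by
    intro j
    have h1 : HasSum (fun k => (inner ℂ (ψ j) (e k) : ℂ) * inner ℂ (e k) (ψ j)) (inner ℂ (ψ j) (ψ j)) :=
      e.hasSum_inner_mul_inner (ψ j) (ψ j)
    have hfun : ∀ k, (inner ℂ (ψ j) (e k) : ℂ) * inner ℂ (e k) (ψ j)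
        = ((‖(inner ℂ (e k) (ψ j) : ℂ)‖ ^ 2 : ℝ) : ℂ) := fun k => by
      rw [← inner_conj_symm (ψ j) (e k), RCLike.conj_mul]
      norm_cast
    have hval : (inner ℂ (ψ j) (ψ j) : ℂ) = ((1 : ℝ) : ℂ) := by
      rw [inner_self_eq_norm_sq_to_K, hψ.1 j]
      norm_num
    rw [hval] at h1
    simp only [hfun] at h1
    have h3 : HasSum (fun k => ‖(inner ℂ (e k) (ψ j) : ℂ)‖ ^ 2) 1 :=
      Complex.hasSum_ofReal.mp h1
    calc ∑' k, (‖(inner ℂ (e k) (ψ j) : ℂ)‖₊ : ℝ≥0∞) ^ 2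
        = ∑' k, ENNReal.ofReal (‖(inner ℂ (e k) (ψ j) : ℂ)‖ ^ 2) := by
          exact tsum_congr fun k => hterm _ _
      _ = ENNReal.ofReal (∑' k, ‖(inner ℂ (e k) (ψ j) : ℂ)‖ ^ 2) :=
          (ENNReal.ofReal_tsum_of_nonneg (fun k => sq_nonneg _) h3.summable).symm
      _ = 1 := by rw [h3.tsum_eq]; simp
  -- Step 1: for all N, partial sums of L are bounded by partial sums of c
  have step1 : ∀ N, ∑ j ∈ Finset.range N, L j ≤ ∑ j ∈ Finset.range N, c j := by
    intro N
    set t : ℕ → ℝ≥0∞ :=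
      fun k => ∑ j ∈ Finset.range N, (‖(inner ℂ (e k) (ψ j) : ℂ)‖₊ : ℝ≥0∞) ^ 2 with htdef
    have hswap : ∑ j ∈ Finset.range N, c j = ∑' k, L k * t k := by
      rw [hcdef, ← Summable.tsum_finsetSum (fun _ _ => ENNReal.summable)]
      refine tsum_congr fun k => ?_
      rw [htdef, Finset.mul_sum]
    have ht1 : ∀ k, t k ≤ 1 := by
      intro k
      have hb : ∑ j ∈ Finset.range N, ‖(inner ℂ (ψ j) (e k) : ℂ)‖ ^ 2 ≤ ‖e k‖ ^ 2 :=
        hψ.sum_inner_products_le (e k)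
      have hek : ‖e k‖ ^ 2 = 1 := by rw [e.orthonormal.1 k]; norm_num
      calc t k = ENNReal.ofReal (∑ j ∈ Finset.range N, ‖(inner ℂ (ψ j) (e k) : ℂ)‖ ^ 2) := by
            rw [htdef, ENNReal.ofReal_sum_of_nonneg (fun j _ => sq_nonneg _)]
            refine Finset.sum_congr rfl fun j _ => ?_
            rw [hterm, norm_inner_symm]
        _ ≤ ENNReal.ofReal 1 := ENNReal.ofReal_le_ofReal (hb.trans_eq hek)
        _ = 1 := ENNReal.ofReal_one
    have htN : (N : ℝ≥0∞) ≤ ∑' k, t k := by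
      have hts : ∑' k, t k = ∑ j ∈ Finset.range N, (1 : ℝ≥0∞) := by
        rw [htdef, Summable.tsum_finsetSum (fun _ _ => ENNReal.summable)]
        exact Finset.sum_congr rfl fun j _ => parseval j
      rw [hts, Finset.sum_const, Finset.card_range, nsmul_eq_mul, mul_one]
    rw [hswap]
    exact bathtub L t (fun i k hik => ENNReal.ofReal_le_ofReal (hlam hik)) ht1 N htN
  -- Step 2: Abel summation
  have step2 : ∀ N, ∑ j ∈ Finset.range N, ENNReal.ofReal (ρ j) * L j
      ≤ ∑ j ∈ Finset.range N, ENNReal.ofReal (ρ j) * c j := fun N =>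
    le_trans (le_add_right (le_refl _))
      (abel_aux (fun j => ENNReal.ofReal (ρ j)) L c
        (fun i k hik => ENNReal.ofReal_le_ofReal (hρ hik))
        (fun j => ENNReal.ofReal_ne_top) step1 N)
  have hfinal := tsum_le_of_partial _ _ step2
  calc ∑' j, ENNReal.ofReal (lam j * ρ j)
      = ∑' j, ENNReal.ofReal (ρ j) * L j := by
        refine tsum_congr fun j => ?_
        rw [hLdef, ← ENNReal.ofReal_mul (hρ0 j), mul_comm]
    _ ≤ ∑' j, ENNReal.ofReal (ρ j) * c j := hfinal
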